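/- For every positive integer n, σ₁(n) + S₂(n) is even, where S₂(n) is the number of ordered integer pairs (p, q) with p > 0, q ≥ 0, p² + q² = n. -/

import Mathlib

open Finset

/-- Parity of a finset with an involution: card ≡ card of fixed points mod 2, in `ZMod 2`. -/
lemma card_invol {α : Type*} [DecidableEq α] (s : Finset α) (g : α → α)
    (hmem : ∀ a ∈ s, g a ∈ s) (hinv : ∀ a ∈ s, g (g a) = a) :
    ((s.card : ZMod 2)) = ((s.filter (fun a => g a = a)).card : ZMod 2) := by
  classical
  have hsplit : s.card = (s.filter (fun a => g a = a)).card
      + (s.filter (fun a => g a ≠ a)).card := (Finset.card_filter_add_card_filter_not _).symm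
  have hzero : (((s.filter (fun a => g a ≠ a)).card : ZMod 2)) = 0 := by
    have := Finset.sum_involution (s := s.filter (fun a => g a ≠ a))
      (f := fun _ => (1 : ZMod 2)) (fun a _ => g a)
      (fun a ha => by decide)
      (fun a ha _ => (Finset.mem_filter.mp ha).2)
      (fun a ha => by
        have has := (Finset.mem_filter.mp ha).1
        have hne := (Finset.mem_filter.mp ha).2
        refine Finset.mem_filter.mpr ⟨hmem a has, ?_⟩
        rw [hinv a has]; exact fun h => hne h.symm)
      (fun a ha => hinv a (Finset.mem_filter.mp ha).1)
    simpa using this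
  rw [hsplit]; push_cast; rw [hzero, add_zero]

/-- Number of divisors mod 2 equals the square indicator. -/
lemma card_divisors_parity (m : ℕ) (hm : m ≠ 0) :
    ((m.divisors.card : ZMod 2)) = if IsSquare m then 1 else 0 := by
  classical
  rw [card_invol m.divisors (fun d => m / d)
    (fun d hd => by
      have h := Nat.mem_divisors.mp hd
      exact Nat.mem_divisors.mpr ⟨Nat.div_dvd_of_dvd h.1, hm⟩)
    (fun d hd => Nat.div_div_self (Nat.mem_divisors.mp hd).1 hm)]
  by_cases hsq : IsSquare m
  · obtain ⟨r, hr⟩ := id hsq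
    have hr0 : r ≠ 0 := by rintro rfl; simp at hr; exact hm hr
    have : m.divisors.filter (fun d => m / d = d) = {r} := by
      ext d
      simp only [Finset.mem_filter, Finset.mem_singleton, Nat.mem_divisors]
      constructor
      · rintro ⟨⟨hdvd, -⟩, hfix⟩
        have hd0 : d ≠ 0 := by rintro rfl; exact hm (Nat.eq_zero_of_zero_dvd hdvd)
        have : d * d = m := by
          conv_rhs => rw [← Nat.div_mul_cancel hdvd]
          rw [hfix]
        exact Nat.mul_self_inj.mp (by rw [this, hr])
      · rintro rfl
        exact ⟨⟨⟨_, hr⟩, hm⟩,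
          by rw [hr, Nat.mul_div_cancel_left _ (Nat.pos_of_ne_zero hr0)]⟩
    rw [this]
    simp [hsq]
  · have : m.divisors.filter (fun d => m / d = d) = ∅ := by
      ext d
      simp only [Finset.mem_filter, Nat.mem_divisors, Finset.notMem_empty, iff_false]
      rintro ⟨⟨hdvd, -⟩, hfix⟩
      exact hsq ⟨d, by rw [← Nat.div_mul_cancel hdvd, hfix]⟩
    rw [this]
    simp [hsq]

lemma sigma_parity (n : ℕ) (hn : n ≠ 0) :
    ((ArithmeticFunction.sigma 1 n : ℕ) : ZMod 2)
      = if IsSquare (ordCompl[2] n) then 1 else 0 := by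
  classical
  have hm0 : ordCompl[2] n ≠ 0 := (Nat.ordCompl_pos 2 hn).ne'
  rw [ArithmeticFunction.sigma_one_apply]
  push_cast
  have hcast : ∀ d : ℕ, ((d : ZMod 2)) = if d % 2 = 1 then 1 else 0 := by
    intro d
    rw [← ZMod.natCast_mod d 2]
    rcases Nat.mod_two_eq_zero_or_one d with h | h <;> simp [h]
  rw [Finset.sum_congr rfl (fun d _ => hcast d), Finset.sum_boole]
  have hset : n.divisors.filter (fun d => d % 2 = 1) = (ordCompl[2] n).divisors := by
    ext d
    simp only [Finset.mem_filter, Nat.mem_divisors]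
    constructor
    · rintro ⟨⟨hdvd, -⟩, hodd⟩
      refine ⟨?_, hm0⟩
      have hcop : Nat.Coprime d (2 ^ (n.factorization 2)) :=
        Nat.Coprime.pow_right _ (Nat.coprime_two_right.mpr (Nat.odd_iff.mpr hodd))
      have : d ∣ 2 ^ (n.factorization 2) * ordCompl[2] n := by
        rw [Nat.ordProj_mul_ordCompl_eq_self]; exact hdvd
      exact (Nat.Coprime.dvd_of_dvd_mul_left hcop this)
    · rintro ⟨hdvd, -⟩
      refine ⟨⟨hdvd.trans (Nat.ordCompl_dvd n 2), hn⟩, ?_⟩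
      have h2 : ¬ (2 ∣ d) := fun h2 => Nat.not_dvd_ordCompl Nat.prime_two hn (h2.trans hdvd)
      omega
  rw [hset]
  exact card_divisors_parity _ hm0

/-- `S₂(n)`: the number of ordered integer pairs `(p, q)` with `p > 0`, `q ≥ 0`
and `p² + q² = n`. -/
noncomputable def S2 (n : ℕ) : ℕ :=
  Nat.card {pq : ℤ × ℤ // 0 < pq.1 ∧ 0 ≤ pq.2 ∧ pq.1 ^ 2 + pq.2 ^ 2 = n}

def repFinset (n : ℕ) : Finset (ℕ × ℕ) :=
  (Finset.range (n+1) ×ˢ Finset.range (n+1)).filter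
    (fun ab => 0 < ab.1 ∧ ab.1 ^ 2 + ab.2 ^ 2 = n)

lemma mem_repFinset {n : ℕ} {ab : ℕ × ℕ} (hn : 0 < n) :
    ab ∈ repFinset n ↔ 0 < ab.1 ∧ ab.1 ^ 2 + ab.2 ^ 2 = n := by
  unfold repFinset
  simp only [Finset.mem_filter, Finset.mem_product, Finset.mem_range]
  constructor
  · rintro ⟨-, h⟩; exact h
  · rintro ⟨h1, h2⟩
    have ha : ab.1 ≤ ab.1 ^ 2 := Nat.le_self_pow two_ne_zero _
    have hb : ab.2 ≤ ab.2 ^ 2 := Nat.le_self_pow two_ne_zero _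
    exact ⟨⟨by omega, by omega⟩, h1, h2⟩

lemma S2_eq (n : ℕ) (hn : 0 < n) : S2 n = (repFinset n).card := by
  rw [← Nat.card_eq_finsetCard]
  refine Nat.card_congr ?_
  refine
    { toFun := fun pq => ⟨(pq.1.1.toNat, pq.1.2.toNat), ?_⟩
      invFun := fun ab => ⟨((ab.1.1 : ℤ), (ab.1.2 : ℤ)), ?_⟩
      left_inv := ?_
      right_inv := ?_ }
  · obtain ⟨⟨p, q⟩, hp, hq, hpq⟩ := pq
    rw [mem_repFinset hn]
    constructor
    · simpa using hp
    · have : ((p.toNat : ℤ)) ^ 2 + ((q.toNat : ℤ)) ^ 2 = (n : ℤ) := by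
        rw [Int.toNat_of_nonneg hp.le, Int.toNat_of_nonneg hq]; exact hpq
      exact_mod_cast this
  · obtain ⟨⟨a, b⟩, hab⟩ := ab
    rw [mem_repFinset hn] at hab
    dsimp only
    refine ⟨by exact_mod_cast hab.1, by positivity, ?_⟩
    exact_mod_cast hab.2
  · rintro ⟨⟨p, q⟩, hp, hq, hpq⟩
    simp [Int.toNat_of_nonneg hp.le, Int.toNat_of_nonneg hq]
  · rintro ⟨⟨a, b⟩, hab⟩
    simp

open Classical in
lemma S2_parity (n : ℕ) (hn : 0 < n) :
    ((S2 n : ZMod 2)) = (if IsSquare n then 1 else 0)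
      + (if ∃ a : ℕ, a ≠ 0 ∧ n = 2 * a ^ 2 then 1 else 0) := by
  classical
  rw [S2_eq n hn]
  have hsplit : (repFinset n).card
      = ((repFinset n).filter (fun ab => ab.2 = 0)).card
        + ((repFinset n).filter (fun ab => ab.2 ≠ 0)).card :=
    (Finset.card_filter_add_card_filter_not _).symm
  rw [hsplit]
  push_cast
  congr 1
  · -- q = 0 part: square indicator
    by_cases hsq : IsSquare n
    · obtain ⟨r, hr⟩ := id hsq
      have hr0 : r ≠ 0 := by rintro rfl; omega
      have : (repFinset n).filter (fun ab => ab.2 = 0) = {(r, 0)} := by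
        ext ⟨a, b⟩
        simp only [Finset.mem_filter, mem_repFinset hn, Finset.mem_singleton, Prod.mk.injEq]
        constructor
        · rintro ⟨⟨ha, hab⟩, rfl⟩
          refine ⟨?_, rfl⟩
          have : a ^ 2 = r ^ 2 := by rw [hr] at hab; ring_nf at hab ⊢; omega
          exact Nat.pow_left_injective (by norm_num) this
        · rintro ⟨rfl, rfl⟩
          exact ⟨⟨Nat.pos_of_ne_zero hr0, by rw [hr]; ring⟩, rfl⟩
      rw [this]; simp [hsq]
    · have : (repFinset n).filter (fun ab => ab.2 = 0) = ∅ := by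
        ext ⟨a, b⟩
        simp only [Finset.mem_filter, mem_repFinset hn, Finset.notMem_empty, iff_false]
        rintro ⟨⟨ha, hab⟩, rfl⟩
        exact hsq ⟨a, by rw [← hab]; ring⟩
      rw [this]; simp [hsq]
  · -- q ≠ 0 part: twice-square indicator, via the swap involution
    rw [card_invol _ Prod.swap
      (fun ab hab => by
        obtain ⟨a, b⟩ := ab
        rw [Finset.mem_filter, mem_repFinset hn] at hab ⊢
        simp only [Prod.swap_prod_mk] at *
        obtain ⟨⟨h1, h2⟩, h3⟩ := hab
        exact ⟨⟨Nat.pos_of_ne_zero h3, by omega⟩, h1.ne'⟩)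
      (fun ab _ => Prod.swap_swap ab)]
    by_cases htw : ∃ a : ℕ, a ≠ 0 ∧ n = 2 * a ^ 2
    · obtain ⟨r, hr0, hr⟩ := id htw
      have : ((repFinset n).filter (fun ab => ab.2 ≠ 0)).filter (fun ab => Prod.swap ab = ab)
          = {(r, r)} := by
        ext ⟨a, b⟩
        simp only [Finset.mem_filter, mem_repFinset hn, Finset.mem_singleton, Prod.mk.injEq,
          Prod.swap_prod_mk]
        constructor
        · rintro ⟨⟨⟨ha, hab⟩, -⟩, hba, -⟩
          have hb2 : b ^ 2 = a ^ 2 := by rw [hba]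
          have : a = r := Nat.pow_left_injective (by norm_num) (by omega : a ^ 2 = r ^ 2)
          exact ⟨this, hba.trans this⟩
        · rintro ⟨rfl, rfl⟩
          exact ⟨⟨⟨Nat.pos_of_ne_zero hr0, by omega⟩, hr0⟩, rfl, rfl⟩
      rw [this]; simp [htw]
    · have : ((repFinset n).filter (fun ab => ab.2 ≠ 0)).filter (fun ab => Prod.swap ab = ab)
          = ∅ := by
        ext ⟨a, b⟩
        simp only [Finset.mem_filter, mem_repFinset hn, Finset.notMem_empty, iff_false,
          Prod.swap_prod_mk, Prod.mk.injEq]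
        rintro ⟨⟨⟨ha, hab⟩, hb⟩, hba, -⟩
        have hb2 : b ^ 2 = a ^ 2 := by rw [hba]
        exact htw ⟨a, ha.ne', by omega⟩
      rw [this]; simp [htw]

lemma ordCompl_two_two : ordCompl[2] 2 = 1 := by
  have h : (2:ℕ).factorization 2 = 1 := Nat.Prime.factorization_self Nat.prime_two
  rw [h]; norm_num

lemma isSquare_ordCompl_of_isSquare {n : ℕ} (h : IsSquare n) :
    IsSquare (ordCompl[2] n) := by
  obtain ⟨s, rfl⟩ := h
  exact ⟨ordCompl[2] s, (Nat.ordCompl_mul s s 2).symm ▸ rfl⟩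

lemma isSquare_ordCompl_of_twice {n a : ℕ} (h : n = 2 * a ^ 2) :
    IsSquare (ordCompl[2] n) := by
  subst h
  rw [Nat.ordCompl_mul, sq, Nat.ordCompl_mul, ordCompl_two_two, one_mul]
  exact ⟨_, rfl⟩

lemma of_isSquare_ordCompl {n : ℕ} (hn : n ≠ 0) (h : IsSquare (ordCompl[2] n)) :
    IsSquare n ∨ ∃ a : ℕ, a ≠ 0 ∧ n = 2 * a ^ 2 := by
  obtain ⟨t, ht⟩ := h
  have ht0 : t ≠ 0 := by
    intro h0
    exact (Nat.ordCompl_pos 2 hn).ne' (by rw [ht, h0, mul_zero])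
  have hn' : n = 2 ^ (n.factorization 2) * (t * t) := by
    rw [← ht, Nat.ordProj_mul_ordCompl_eq_self]
  rcases Nat.even_or_odd (n.factorization 2) with ⟨j, hj⟩ | ⟨j, hj⟩
  · left
    exact ⟨2 ^ j * t, by rw [hn', hj]; ring⟩
  · right
    exact ⟨2 ^ j * t, by positivity, by rw [hn', hj]; ring⟩

lemma not_both {n : ℕ} (hn : n ≠ 0) (h1 : IsSquare n)
    (h2 : ∃ a : ℕ, a ≠ 0 ∧ n = 2 * a ^ 2) : False := by
  obtain ⟨s, hs⟩ := h1
  obtain ⟨a, ha0, ha⟩ := h2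
  have hs0 : s ≠ 0 := by rintro rfl; simp at hs; omega
  have e1 : n.factorization 2 = 2 * s.factorization 2 := by
    rw [hs, Nat.factorization_mul hs0 hs0]; simp; ring
  have e2 : n.factorization 2 = 1 + 2 * a.factorization 2 := by
    rw [ha, Nat.factorization_mul two_ne_zero (by positivity), sq,
      Nat.factorization_mul ha0 ha0]
    simp [Nat.Prime.factorization_self Nat.prime_two]
    ring
  omega

/-- For every positive integer `n`, `σ₁(n) + S₂(n)` is even. -/
theorem sigma_add_S2_even (n : ℕ) (hn : 0 < n) :
    2 ∣ ArithmeticFunction.sigma 1 n + S2 n := by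
  classical
  refine (ZMod.natCast_eq_zero_iff _ 2).mp ?_
  push_cast
  rw [sigma_parity n hn.ne', S2_parity n hn]
  by_cases h1 : IsSquare n <;> by_cases h2 : ∃ a : ℕ, a ≠ 0 ∧ n = 2 * a ^ 2
  · exact absurd h1 (fun h => not_both hn.ne' h h2)
  · have h3 : IsSquare (ordCompl[2] n) := isSquare_ordCompl_of_isSquare h1
    simp [h1, h2, h3]
    decide
  · obtain ⟨a, -, ha⟩ := id h2
    have h3 : IsSquare (ordCompl[2] n) := isSquare_ordCompl_of_twice ha
    simp [h1, h2, h3]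
    decide
  · have h3 : ¬ IsSquare (ordCompl[2] n) := fun h => by
      rcases of_isSquare_ordCompl hn.ne' h with h | h
      exacts [h1 h, h2 h]
    simp [h1, h2, h3]
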